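/- Let R and B be simple graphs on a common vertex set of size n such that the pair (R, B) contains neither T1 nor T2. Then min(e(R), e(B)) ≤ n²/4. -/

import Mathlib

open SimpleGraph Set

/-- The pair `(R, B)` contains `T1`: a triangle `x, y, z` in which the edge `{x,y}` is both
red and blue and the edges `{x,z}`, `{y,z}` are red. (Distinctness of `x, y, z` follows from
adjacency in a simple graph.) -/
def ContainsT1 {V : Type*} (R B : SimpleGraph V) : Prop :=
  ∃ x y z : V, R.Adj x y ∧ B.Adj x y ∧ R.Adj x z ∧ R.Adj y z

/-- The pair `(R, B)` contains `T2`: a triangle `x, y, z` in which the edge `{x,y}` is both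
red and blue, the edge `{x,z}` is red and the edge `{y,z}` is blue. -/
def ContainsT2 {V : Type*} (R B : SimpleGraph V) : Prop :=
  ∃ x y z : V, R.Adj x y ∧ B.Adj x y ∧ R.Adj x z ∧ B.Adj y z

lemma purple_deg_bound {V : Type} [Fintype V] {R B : SimpleGraph V}
    [DecidableRel R.Adj] [DecidableRel B.Adj]
    (hT2 : ¬ ContainsT2 R B) {x y : V} (hR : R.Adj x y) (hB : B.Adj x y) :
    R.degree x + B.degree y ≤ Fintype.card V := by
  classical
  have hdisj : Disjoint (R.neighborFinset x) (B.neighborFinset y) := by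
    rw [Finset.disjoint_left]
    intro z hz hz'
    exact hT2 ⟨x, y, z, hR, hB, by simpa using hz, by simpa using hz'⟩
  calc R.degree x + B.degree y
      = ((R.neighborFinset x) ∪ (B.neighborFinset y)).card :=
        (Finset.card_union_of_disjoint hdisj).symm
    _ ≤ (Finset.univ : Finset V).card := Finset.card_le_card (Finset.subset_univ _)
    _ = Fintype.card V := rfl

lemma ncard_edgeSet {V : Type} [Fintype V] (G : SimpleGraph V) [Fintype G.edgeSet] :
    G.edgeSet.ncard = G.edgeFinset.card := by
  rw [Set.ncard_eq_toFinset_card']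
  rfl

lemma edge_count_del {V : Type} [Fintype V] [DecidableEq V] (G : SimpleGraph V)
    [DecidableRel G.Adj] {x y : V} (hxy : G.Adj x y) :
    G.edgeSet.ncard + 1 ≤
      (G.comap (Subtype.val : {v : V // v ≠ x ∧ v ≠ y} → V)).edgeSet.ncard
        + G.degree x + G.degree y := by
  classical
  set G' := G.comap (Subtype.val : {v : V // v ≠ x ∧ v ≠ y} → V) with hG'
  have hcardR : G.edgeSet.ncard = G.edgeFinset.card := ncard_edgeSet G
  have hcardR' : G'.edgeSet.ncard = G'.edgeFinset.card := ncard_edgeSet G'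
  rw [hcardR, hcardR']
  set emb : Sym2 {v : V // v ≠ x ∧ v ≠ y} ↪ Sym2 V :=
    ⟨Sym2.map Subtype.val, Sym2.map.injective Subtype.val_injective⟩ with hemb
  have hsub : G.edgeFinset ⊆
      (G'.edgeFinset.map emb) ∪ (G.incidenceFinset x ∪ (G.incidenceFinset y).erase s(x,y)) := by
    intro e he
    induction e with
    | h a b =>
      have hadj : G.Adj a b := by simpa using he
      by_cases hax : a = x ∨ b = x
      · apply Finset.mem_union_right
        apply Finset.mem_union_left
        rw [mem_incidenceFinset]
        refine ⟨by rw [mem_edgeSet]; exact hadj, ?_⟩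
        rcases hax with h | h <;> simp [h]
      · push_neg at hax
        by_cases hay : a = y ∨ b = y
        · apply Finset.mem_union_right
          apply Finset.mem_union_right
          rw [Finset.mem_erase]
          constructor
          · intro hcon
            rw [Sym2.eq_iff] at hcon
            rcases hcon with ⟨h1, _⟩ | ⟨_, h2⟩
            · exact hax.1 h1
            · exact hax.2 h2
          · rw [mem_incidenceFinset]
            refine ⟨by rw [mem_edgeSet]; exact hadj, ?_⟩
            rcases hay with h | h <;> simp [h]
        · push_neg at hay
          apply Finset.mem_union_left
          rw [Finset.mem_map]
          refine ⟨s(⟨a, hax.1, hay.1⟩, ⟨b, hax.2, hay.2⟩), ?_, ?_⟩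
          · rw [mem_edgeFinset]
            exact hadj
          · rfl
  have hxyinc : s(x,y) ∈ G.incidenceFinset y := by
    rw [mem_incidenceFinset]
    exact ⟨by rw [mem_edgeSet]; exact hxy, by simp⟩
  have hdegy : 1 ≤ G.degree y := by
    rw [← G.card_incidenceFinset_eq_degree y]
    exact Finset.card_pos.mpr ⟨s(x,y), hxyinc⟩
  have hcard := Finset.card_le_card hsub
  have h1 : ((G'.edgeFinset.map emb) ∪
      (G.incidenceFinset x ∪ (G.incidenceFinset y).erase s(x,y))).card ≤
      G'.edgeFinset.card + G.degree x + (G.degree y - 1) := by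
    calc _ ≤ (G'.edgeFinset.map emb).card +
          (G.incidenceFinset x ∪ (G.incidenceFinset y).erase s(x,y)).card :=
          Finset.card_union_le _ _
      _ ≤ (G'.edgeFinset.map emb).card + ((G.incidenceFinset x).card +
          ((G.incidenceFinset y).erase s(x,y)).card) :=
          Nat.add_le_add_left (Finset.card_union_le _ _) _
      _ = G'.edgeFinset.card + G.degree x + (G.degree y - 1) := by
          rw [Finset.card_map, Finset.card_erase_of_mem hxyinc,
            G.card_incidenceFinset_eq_degree, G.card_incidenceFinset_eq_degree]
          ring
  omega

lemma key : ∀ (n : ℕ) (V : Type) [Fintype V] (R B : SimpleGraph V),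
    Fintype.card V = n → ¬ ContainsT2 R B →
    2 * (R.edgeSet.ncard + B.edgeSet.ncard) ≤ n ^ 2 := by
  intro n
  induction n using Nat.strong_induction_on with
  | _ n IH =>
    intro V _ R B hcard hT2
    classical
    by_cases hP : ∃ x y, R.Adj x y ∧ B.Adj x y
    · -- purple edge exists
      obtain ⟨x, y, hR, hB⟩ := hP
      have hn2 : 2 ≤ n := by
        rw [← hcard]
        have : Nontrivial V := ⟨⟨x, y, hR.ne⟩⟩
        exact Fintype.one_lt_card
      -- the smaller vertex set
      set V' := {v : V // v ≠ x ∧ v ≠ y} with hV'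
      have hcard' : Fintype.card V' = n - 2 := by
        have h1 : Fintype.card {v : V // v ≠ x ∧ v ≠ y}
            = ((Finset.univ.erase x).erase y).card := by
          rw [Fintype.card_subtype]
          congr 1
          ext v
          simp [and_comm]
        have h2 : y ∈ Finset.univ.erase x :=
          Finset.mem_erase.mpr ⟨hR.ne', Finset.mem_univ y⟩
        rw [h1, Finset.card_erase_of_mem h2, Finset.card_erase_of_mem (Finset.mem_univ x),
          Finset.card_univ, hcard]
        omega
      set R' := R.comap (Subtype.val : V' → V) with hR'
      set B' := B.comap (Subtype.val : V' → V) with hB'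
      have hT2' : ¬ ContainsT2 R' B' := by
        rintro ⟨a, b, c, h1, h2, h3, h4⟩
        exact hT2 ⟨a.1, b.1, c.1, h1, h2, h3, h4⟩
      have hIH := IH (n - 2) (by omega) V' R' B' hcard' hT2'
      have hdR : R.edgeSet.ncard + 1 ≤ R'.edgeSet.ncard + R.degree x + R.degree y :=
        edge_count_del R hR
      have hdB : B.edgeSet.ncard + 1 ≤ B'.edgeSet.ncard + B.degree x + B.degree y :=
        edge_count_del B hB
      have hd1 : R.degree x + B.degree y ≤ n := by
        rw [← hcard]; exact purple_deg_bound hT2 hR hB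
      have hd2 : B.degree x + R.degree y ≤ n := by
        rw [← hcard]
        have := purple_deg_bound hT2 hR.symm hB.symm
        omega
      obtain ⟨m, rfl⟩ : ∃ m, n = m + 2 := ⟨n - 2, by omega⟩
      have hm : m + 2 - 2 = m := by omega
      rw [hm] at hIH
      have hsq1 : (m + 2) ^ 2 = m ^ 2 + (4 * m + 4) := by ring
      rw [hsq1]
      generalize hK : m ^ 2 = K at hIH ⊢
      omega
    · -- no purple edge
      push_neg at hP
      have hdeg : ∀ v : V, R.degree v + B.degree v ≤ n - 1 := by
        intro v
        have hdisj : Disjoint (R.neighborFinset v) (B.neighborFinset v) := by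
          rw [Finset.disjoint_left]
          intro z hz hz'
          exact hP v z (by simpa using hz) (by simpa using hz')
        have hsub : (R.neighborFinset v) ∪ (B.neighborFinset v) ⊆ Finset.univ.erase v := by
          intro z hz
          rw [Finset.mem_erase]
          rcases Finset.mem_union.mp hz with h | h
          · exact ⟨(R.ne_of_adj (by simpa using h)).symm, Finset.mem_univ z⟩
          · exact ⟨(B.ne_of_adj (by simpa using h)).symm, Finset.mem_univ z⟩
        calc R.degree v + B.degree v
            = ((R.neighborFinset v) ∪ (B.neighborFinset v)).card :=
              (Finset.card_union_of_disjoint hdisj).symm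
          _ ≤ (Finset.univ.erase v).card := Finset.card_le_card hsub
          _ = n - 1 := by rw [Finset.card_erase_of_mem (Finset.mem_univ v)]; simp [hcard]
      have hsumR : ∑ v : V, R.degree v = 2 * R.edgeFinset.card :=
        R.sum_degrees_eq_twice_card_edges
      have hsumB : ∑ v : V, B.degree v = 2 * B.edgeFinset.card :=
        B.sum_degrees_eq_twice_card_edges
      have hsum : 2 * R.edgeFinset.card + 2 * B.edgeFinset.card ≤ n * (n - 1) := by
        calc 2 * R.edgeFinset.card + 2 * B.edgeFinset.card
            = ∑ v : V, (R.degree v + B.degree v) := by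
              rw [Finset.sum_add_distrib, hsumR, hsumB]
          _ ≤ ∑ _v : V, (n - 1) := Finset.sum_le_sum fun v _ => hdeg v
          _ = n * (n - 1) := by simp [hcard, mul_comm]
      rw [ncard_edgeSet R, ncard_edgeSet B]
      have : n * (n - 1) ≤ n ^ 2 := by
        rcases n with _ | k
        · simp
        · have : (k+1) * (k + 1 - 1) ≤ (k+1) * (k+1) := by
            apply Nat.mul_le_mul_left; omega
          calc (k+1) * (k+1-1) ≤ (k+1)*(k+1) := this
            _ = (k+1)^2 := by ring
      omega

/-- `mex({T1, T2}) ≤ 1/2`: if the bicolored graph `(R, B)` on `n` vertices contains neither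
`T1` nor `T2`, then one of the color classes has at most `n²/4` edges. -/
theorem T1_T2_free_min_edge_bound {V : Type} [Fintype V] {n : ℕ} (hV : Fintype.card V = n)
    (R B : SimpleGraph V) (h1 : ¬ ContainsT1 R B) (h2 : ¬ ContainsT2 R B) :
    min (R.edgeSet.ncard : ℝ) (B.edgeSet.ncard : ℝ) ≤ (n : ℝ)^2/4 := by
  have hkey := key n V R B hV h2
  have hcast : ((R.edgeSet.ncard : ℝ) + (B.edgeSet.ncard : ℝ)) ≤ (n : ℝ) ^ 2 / 2 := by
    have : ((2 * (R.edgeSet.ncard + B.edgeSet.ncard) : ℕ) : ℝ) ≤ ((n ^ 2 : ℕ) : ℝ) := by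
      exact_mod_cast hkey
    push_cast at this
    linarith
  rcases le_total (R.edgeSet.ncard : ℝ) (B.edgeSet.ncard : ℝ) with h | h
  · rw [min_eq_left h]; linarith
  · rw [min_eq_right h]; linarith
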